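/- Let C₁ be an [n, κ-1, d] cyclic linear code over F_q, and let e = (1,0,…,0). Then the coset C = { a + e : a ∈ C₁ } is a κ-weakly mutually uncorrelated code with minimum Hamming distance d. -/

import Mathlib

open Module
open Fin.NatCast

/-- The left cyclic shift. -/
def shiftL {F : Type*} {n : ℕ} [NeZero n] (x : Fin n → F) : Fin n → F :=
  fun i => x (i + 1)

lemma shiftL_iterate_apply {F : Type*} {n : ℕ} [NeZero n] (t : ℕ) (x : Fin n → F)
    (i : Fin n) : (shiftL (F := F) (n := n))^[t] x i = x (i + (t : Fin n)) := by
  induction t generalizing x i with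
  | zero => simp
  | succ t ih =>
      rw [Function.iterate_succ_apply, ih]
      simp only [shiftL]
      congr 1
      push_cast
      abel

lemma shiftL_iterate_mem {F : Type*} [Field F] {n : ℕ} [NeZero n]
    (C₁ : Submodule F (Fin n → F))
    (hcyc : ∀ c ∈ C₁, (fun i : Fin n => c (i + 1)) ∈ C₁)
    (t : ℕ) (x : Fin n → F) (hx : x ∈ C₁) :
    (shiftL (F := F) (n := n))^[t] x ∈ C₁ := by
  induction t generalizing x with
  | zero => simpa using hx
  | succ t ih =>
      rw [Function.iterate_succ_apply]
      exact ih _ (hcyc x hx)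

/-- Key lemma: in a shift-closed code of dimension κ-1, no codeword starts with
1 followed by κ-1 zeros. -/
lemma noRun_aux (F : Type*) [Field F] (n κ : ℕ) [NeZero n]
    (hκ : 1 ≤ κ) (hκn : κ ≤ n)
    (C₁ : Submodule F (Fin n → F))
    (hcyc : ∀ c ∈ C₁, (fun i : Fin n => c (i + 1)) ∈ C₁)
    (hdim : Module.finrank F C₁ = κ - 1)
    (c : Fin n → F) (hc : c ∈ C₁) (h0 : c 0 = 1)
    (hz : ∀ m : ℕ, 1 ≤ m → m < κ → ∀ hm : m < n, c ⟨m, hm⟩ = 0) : False := by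
  classical
  set v : Fin κ → (Fin n → F) := fun j => (shiftL (F := F) (n := n))^[n - (j : ℕ)] c with hv
  have hval : ∀ (j : Fin κ) (p : Fin n) (m : ℕ) (hm : m < n),
      ((p : ℕ) + (n - (j : ℕ))) % n = m → v j p = c ⟨m, hm⟩ := by
    intro j p m hm hmod
    rw [hv]
    simp only
    rw [shiftL_iterate_apply]
    congr 1
    apply Fin.ext
    rw [Fin.add_def, Fin.val_natCast]
    show ((p : ℕ) + (n - (j : ℕ)) % n) % n = m
    rw [← hmod]
    conv_rhs => rw [Nat.add_mod]
    rw [Nat.mod_eq_of_lt p.isLt]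
  have hdiag : ∀ j : Fin κ, v j (Fin.castLE hκn j) = 1 := by
    intro j
    rw [hval j _ 0 (NeZero.pos n)]
    · simpa using h0
    · have h1 : (Fin.castLE hκn j : Fin n).val = (j : ℕ) := rfl
      rw [h1]
      have : (j : ℕ) + (n - (j : ℕ)) = n := by omega
      rw [this, Nat.mod_self]
  have hupper : ∀ i j : Fin κ, j < i → v j (Fin.castLE hκn i) = 0 := by
    intro i j hji
    have hji' : (j : ℕ) < (i : ℕ) := hji
    have hlt : (i : ℕ) - (j : ℕ) < n := by omega
    rw [hval j _ ((i : ℕ) - (j : ℕ)) hlt]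
    · exact hz _ (by omega) (by omega) hlt
    · have h1 : (Fin.castLE hκn i : Fin n).val = (i : ℕ) := rfl
      rw [h1]
      have : (i : ℕ) + (n - (j : ℕ)) = n + ((i : ℕ) - (j : ℕ)) := by omega
      rw [this, Nat.add_mod_left, Nat.mod_eq_of_lt hlt]
  have li : LinearIndependent F v := by
    rw [Fintype.linearIndependent_iff]
    intro g hg
    by_contra hgn
    push_neg at hgn
    obtain ⟨j, hj⟩ := hgn
    set S : Finset (Fin κ) := Finset.univ.filter (fun j => g j ≠ 0) with hS
    have hSne : S.Nonempty := ⟨j, by simp [hS, hj]⟩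
    set j₀ := S.max' hSne with hj₀
    have hj₀mem : g j₀ ≠ 0 := by
      have := S.max'_mem hSne
      simpa [hS] using this
    have hsum := congrFun hg (Fin.castLE hκn j₀)
    rw [Finset.sum_apply] at hsum
    have : ∑ j' : Fin κ, g j' • v j' (Fin.castLE hκn j₀) = g j₀ := by
      rw [Finset.sum_eq_single j₀]
      · rw [hdiag, smul_eq_mul, mul_one]
      · intro j' _ hne
        by_cases hgz : g j' = 0
        · simp [hgz]
        · have hj'S : j' ∈ S := by simp [hS, hgz]
          have hle : j' ≤ j₀ := S.le_max' _ hj'S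
          have : j' < j₀ := lt_of_le_of_ne hle hne
          rw [hupper j₀ j' this, smul_zero]
      · intro h
        exact absurd (Finset.mem_univ j₀) h
    simp only [Pi.smul_apply] at hsum
    rw [this] at hsum
    exact hj₀mem (by simpa using hsum)
  have hvmem : ∀ j : Fin κ, v j ∈ C₁ := fun j =>
    shiftL_iterate_mem C₁ hcyc _ c hc
  have li' : LinearIndependent F (fun j : Fin κ => (⟨v j, hvmem j⟩ : C₁)) := by
    apply LinearIndependent.of_comp C₁.subtype
    exact li
  have hcard := li'.fintype_card_le_finrank
  rw [hdim, Fintype.card_fin] at hcard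
  omega

/-- Construction: the coset C₁ + e of an [n, κ-1, d] cyclic code C₁, where
e = (1,0,…,0), is a κ-weakly mutually uncorrelated code of minimum Hamming
distance d. -/
theorem stmt_7 (F : Type*) [Field F] [DecidableEq F] (n κ d : ℕ) [NeZero n]
    (hκ : 1 ≤ κ) (hκn : κ ≤ n)
    (C₁ : Submodule F (Fin n → F))
    (hcyc : ∀ c ∈ C₁, (fun i : Fin n => c (i + 1)) ∈ C₁)
    (hdim : Module.finrank F C₁ = κ - 1)
    (hdist : ∀ a ∈ C₁, ∀ b ∈ C₁, a ≠ b → d ≤ hammingDist a b)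
    (e : Fin n → F) (he : e = fun i => if i = 0 then 1 else 0)
    (C : Set (Fin n → F)) (hC : C = {x | ∃ a ∈ C₁, x = a + e}) :
    (∀ a ∈ C, ∀ b ∈ C, ∀ (l : ℕ), κ ≤ l → ∀ (hl : l < n),
      ¬ ∀ (i : ℕ) (hi : i < l), a ⟨i, by omega⟩ = b ⟨n - l + i, by omega⟩) ∧
    (∀ a ∈ C, ∀ b ∈ C, a ≠ b → d ≤ hammingDist a b) := by
  subst hC
  constructor
  · rintro a ⟨a₁, ha₁, rfl⟩ b ⟨b₁, hb₁, rfl⟩ l hκl hl H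
    -- the shifted difference
    set u : Fin n → F :=
      (shiftL (F := F) (n := n))^[n - l] b₁ - a₁ with hu
    have humem : u ∈ C₁ :=
      sub_mem (shiftL_iterate_mem C₁ hcyc _ b₁ hb₁) ha₁
    -- value of u at position i < l
    have huval : ∀ (i : ℕ) (hi : i < l),
        u ⟨i, by omega⟩ = if i = 0 then 1 else 0 := by
      intro i hi
      have hin : i < n := by omega
      have hidx : (⟨i, hin⟩ : Fin n) + ((n - l : ℕ) : Fin n) = ⟨n - l + i, by omega⟩ := by
        apply Fin.ext
        rw [Fin.add_def, Fin.val_natCast]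
        simp only
        rw [Nat.mod_eq_of_lt (by omega : n - l < n)]
        rw [Nat.mod_eq_of_lt (by omega : i + (n - l) < n)]
        omega
      have hHi := H i hi
      simp only [Pi.add_apply, he] at hHi
      have he1 : (if (⟨i, hin⟩ : Fin n) = 0 then (1 : F) else 0)
          = if i = 0 then 1 else 0 := by
        congr 1
        simp [Fin.ext_iff]
      have he2 : (if (⟨n - l + i, by omega⟩ : Fin n) = 0 then (1 : F) else 0) = 0 := by
        rw [if_neg]
        simp only [Fin.ext_iff, Fin.val_zero]
        omega
      rw [he1, he2, add_zero] at hHi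
      rw [hu]
      simp only [Pi.sub_apply]
      rw [shiftL_iterate_apply, hidx, ← hHi]
      ring
    have h0 : u 0 = 1 := by
      have := huval 0 (by omega)
      simpa using this
    have hz : ∀ m : ℕ, 1 ≤ m → m < κ → ∀ hm : m < n, u ⟨m, hm⟩ = 0 := by
      intro m h1m hmκ hm
      have h := huval m (by omega)
      rw [if_neg (by omega : ¬ m = 0)] at h
      exact h
    exact noRun_aux F n κ hκ hκn C₁ hcyc hdim u humem h0 hz
  · rintro a ⟨a₁, ha₁, rfl⟩ b ⟨b₁, hb₁, rfl⟩ hab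
    have hne : a₁ ≠ b₁ := fun h => hab (by rw [h])
    have heq : hammingDist (a₁ + e) (b₁ + e) = hammingDist a₁ b₁ := by
      simp [hammingDist, ne_eq, add_left_inj]
    rw [heq]
    exact hdist _ ha₁ _ hb₁ hne
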